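/- arXiv:2509.03333 — 2 statements merged into one kernel-verified Lean document; each statement's English description precedes it below -/
import Mathlib

section
/- Let H be a real Hilbert space, C ⊆ H a nonempty closed convex set, and f : H → ℝ differentiable with L-Lipschitz gradient (L > 0). Let 0 < μ ≤ 1/L, let x ∈ C, and let x⁺ = proj_C(x − μ·∇f(x)) be the metric projection of x − μ·∇f(x) onto C. Then f(x⁺) ≤ f(x) − (1/(2μ))·‖x⁺ − x‖²; equivalently, with the gradient mapping 𝒫(μ, x) = (x − x⁺)/μ, one has f(x⁺) ≤ f(x) − (μ/2)·‖𝒫(μ, x)‖². -/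
open InnerProductSpace

private lemma descent_lemma
    {H : Type*} [NormedAddCommGroup H] [InnerProductSpace ℝ H] [CompleteSpace H]
    (f : H → ℝ) (L : ℝ) (hL : 0 < L)
    (hdiff : Differentiable ℝ f)
    (hLip : ∀ u v : H, ‖gradient f u - gradient f v‖ ≤ L * ‖u - v‖)
    (x y : H) :
    f y ≤ f x + ⟪gradient f x, y - x⟫_ℝ + L / 2 * ‖y - x‖ ^ 2 := by
  set d := y - x with hd
  have hgradcont : Continuous (gradient f) := by
    have : LipschitzWith (Real.toNNReal L) (gradient f) := by
      apply LipschitzWith.of_dist_le_mul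
      intro u v
      rw [dist_eq_norm, dist_eq_norm, Real.coe_toNNReal L hL.le]
      exact hLip u v
    exact this.continuous
  have hderiv : ∀ t : ℝ, HasDerivAt (fun s : ℝ => f (x + s • d))
      ⟪gradient f (x + t • d), d⟫_ℝ t := by
    intro t
    have h1 : HasDerivAt (fun s : ℝ => x + s • d) d t := by
      simpa using ((hasDerivAt_id t).smul_const d).const_add x
    have h2 : HasFDerivAt f (toDual ℝ H (gradient f (x + t • d))) (x + t • d) :=
      (hdiff (x + t • d)).hasGradientAt.hasFDerivAt
    have := h2.comp_hasDerivAt t h1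
    simp at this ⊢
    exact this
  have hcont : Continuous fun t : ℝ => ⟪gradient f (x + t • d), d⟫_ℝ := by
    exact (hgradcont.comp (by continuity)).inner continuous_const
  have hFTC : ∫ t in (0:ℝ)..1, ⟪gradient f (x + t • d), d⟫_ℝ = f y - f x := by
    have := intervalIntegral.integral_eq_sub_of_hasDerivAt
      (f := fun s : ℝ => f (x + s • d)) (fun t _ => hderiv t)
      (hcont.intervalIntegrable 0 1)
    simpa [hd] using this
  have hbound : ∀ t ∈ Set.Icc (0:ℝ) 1,
      ⟪gradient f (x + t • d), d⟫_ℝ ≤ ⟪gradient f x, d⟫_ℝ + L * t * ‖d‖ ^ 2 := by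
    intro t ht
    have key : ⟪gradient f (x + t • d) - gradient f x, d⟫_ℝ ≤ L * t * ‖d‖ ^ 2 := by
      calc ⟪gradient f (x + t • d) - gradient f x, d⟫_ℝ
          ≤ ‖gradient f (x + t • d) - gradient f x‖ * ‖d‖ :=
            real_inner_le_norm _ _
        _ ≤ (L * ‖x + t • d - x‖) * ‖d‖ := by
            apply mul_le_mul_of_nonneg_right (hLip _ _) (norm_nonneg _)
        _ = L * t * ‖d‖ ^ 2 := by
            rw [show x + t • d - x = t • d by abel, norm_smul,
              Real.norm_eq_abs, abs_of_nonneg ht.1]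
            ring
    have := inner_sub_left (𝕜 := ℝ) (gradient f (x + t • d)) (gradient f x) d
    linarith [key, this.symm.le, this.le]
  have hint : ∫ t in (0:ℝ)..1, ⟪gradient f (x + t • d), d⟫_ℝ
      ≤ ∫ t in (0:ℝ)..1, (⟪gradient f x, d⟫_ℝ + L * t * ‖d‖ ^ 2) := by
    apply intervalIntegral.integral_mono_on (by norm_num)
      (hcont.intervalIntegrable 0 1)
      ((by continuity : Continuous fun t : ℝ =>
        ⟪gradient f x, d⟫_ℝ + L * t * ‖d‖ ^ 2).intervalIntegrable 0 1)
    exact hbound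
  have hrhs : ∫ t in (0:ℝ)..1, (⟪gradient f x, d⟫_ℝ + L * t * ‖d‖ ^ 2)
      = ⟪gradient f x, d⟫_ℝ + L / 2 * ‖d‖ ^ 2 := by
    rw [intervalIntegral.integral_add (intervalIntegrable_const)
      (((intervalIntegral.intervalIntegrable_id).const_mul L).mul_const (‖d‖ ^ 2))]
    have h2 : ∀ t : ℝ, L * t * ‖d‖ ^ 2 = (L * ‖d‖ ^ 2) * t := fun t => by ring
    simp only [h2]
    rw [intervalIntegral.integral_const_mul, integral_id, intervalIntegral.integral_const]
    simp
    ring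
  rw [hFTC] at hint
  rw [hrhs] at hint
  linarith

/-- Sufficient decrease of one projected gradient step for an `L`-smooth function on a
Hilbert space, with step size `0 < μ ≤ 1/L`. -/
theorem projected_gradient_sufficient_decrease
    {H : Type*} [NormedAddCommGroup H] [InnerProductSpace ℝ H] [CompleteSpace H]
    (C : Set H) (hCclosed : IsClosed C) (hCconv : Convex ℝ C) (hCne : C.Nonempty)
    (f : H → ℝ) (L : ℝ) (hL : 0 < L)
    (hdiff : Differentiable ℝ f)
    (hLip : ∀ u v : H, ‖gradient f u - gradient f v‖ ≤ L * ‖u - v‖)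
    (μ : ℝ) (hμ : 0 < μ) (hμL : μ ≤ 1 / L)
    (x : H) (hx : x ∈ C)
    (xp : H) (hxpC : xp ∈ C)
    (hproj : ∀ y ∈ C, ‖x - μ • gradient f x - xp‖ ≤ ‖x - μ • gradient f x - y‖) :
    f xp ≤ f x - (1 / (2 * μ)) * ‖xp - x‖ ^ 2 := by
  set u := x - μ • gradient f x with hu
  have hnonempty : Nonempty C := ⟨⟨xp, hxpC⟩⟩
  have hinf : ‖u - xp‖ = ⨅ w : C, ‖u - w‖ := by
    apply le_antisymm
    · exact le_ciInf fun w => hproj w w.2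
    · exact ciInf_le ⟨0, fun _ ⟨w, hw⟩ => hw ▸ norm_nonneg _⟩ (⟨xp, hxpC⟩ : C)
  have hVI : ∀ w ∈ C, ⟪u - xp, w - xp⟫_ℝ ≤ 0 :=
    (norm_eq_iInf_iff_real_inner_le_zero hCconv hxpC).1 hinf
  have hVIx : ⟪u - xp, x - xp⟫_ℝ ≤ 0 := hVI x hx
  set d := xp - x with hd
  have hexp : ⟪u - xp, x - xp⟫_ℝ = ‖d‖ ^ 2 + μ * ⟪gradient f x, d⟫_ℝ := by
    have h1 : u - xp = -d - μ • gradient f x := by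
      rw [hu, hd]; abel
    have h2 : x - xp = -d := by rw [hd]; abel
    rw [h1, h2, inner_sub_left, inner_neg_neg, real_inner_smul_left,
      inner_neg_right, real_inner_self_eq_norm_sq]
    ring
  have hinner : ⟪gradient f x, d⟫_ℝ ≤ -(1 / μ) * ‖d‖ ^ 2 := by
    rw [hexp] at hVIx
    have h1 : ⟪gradient f x, d⟫_ℝ ≤ (-‖d‖ ^ 2) / μ :=
      (le_div_iff₀ hμ).2 (by linarith)
    have h2 : (-‖d‖ ^ 2) / μ = -(1 / μ) * ‖d‖ ^ 2 := by ring
    linarith [h2 ▸ h1]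
  have hdesc := descent_lemma f L hL hdiff hLip x xp
  have hLμ : L * μ ≤ 1 := by
    have := (le_div_iff₀ hL).1 hμL
    linarith
  have hnorm : (0:ℝ) ≤ ‖d‖ ^ 2 := sq_nonneg _
  have hthis : f xp ≤ f x + (-(1/μ) * ‖d‖^2) + L / 2 * ‖d‖^2 := by
    rw [← hd] at hdesc; linarith
  have hcoef : 1 / (2 * μ) ≤ 1 / μ - L / 2 := by
    have heq : 1 / μ - L / 2 - 1 / (2 * μ) = (1 - L * μ) / (2 * μ) := by
      field_simp; ring
    have hpos : (0:ℝ) ≤ (1 - L * μ) / (2 * μ) :=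
      div_nonneg (by linarith) (by positivity)
    linarith [heq ▸ hpos]
  show f xp ≤ f x - 1 / (2 * μ) * ‖d‖ ^ 2
  nlinarith [mul_le_mul_of_nonneg_right hcoef hnorm]
end

section
/- Let H be a real Hilbert space, C ⊆ H a nonempty closed convex set, f : H → ℝ continuously differentiable, and μ > 0. Let (x_t) ⊆ C satisfy x_{t+1} = proj_C(x_t − μ·∇f(x_t)). Suppose a subsequence (x_{t_j}) converges to x* and ‖x_{t_j+1} − x_{t_j}‖ → 0. Then x* ∈ C, x* = proj_C(x* − μ·∇f(x*)), and x* is a stationary point of f over C: ⟨∇f(x*), y − x*⟩ ≥ 0 for all y ∈ C. -/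
open Filter Topology RealInnerProductSpace

/-- Cluster points of the projected gradient iteration are fixed points of the projected
gradient map and stationary points of `f` over `C`. -/
theorem projected_gradient_cluster_point_stationary
    {H : Type*} [NormedAddCommGroup H] [InnerProductSpace ℝ H] [CompleteSpace H]
    (C : Set H) (hCclosed : IsClosed C) (hCconv : Convex ℝ C) (hCne : C.Nonempty)
    (f : H → ℝ) (hf : ContDiff ℝ 1 f)
    (μ : ℝ) (hμ : 0 < μ)
    (x : ℕ → H) (hmem : ∀ t : ℕ, x t ∈ C)
    (hproj : ∀ t : ℕ, ∀ y ∈ C,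
      ‖x t - μ • gradient f (x t) - x (t + 1)‖ ≤ ‖x t - μ • gradient f (x t) - y‖)
    (φ : ℕ → ℕ) (hφ : StrictMono φ) (xstar : H)
    (hconv : Tendsto (fun j => x (φ j)) atTop (𝓝 xstar))
    (hdiff0 : Tendsto (fun j => ‖x (φ j + 1) - x (φ j)‖) atTop (𝓝 0)) :
    xstar ∈ C ∧
      (∀ y ∈ C, ‖xstar - μ • gradient f xstar - xstar‖
        ≤ ‖xstar - μ • gradient f xstar - y‖) ∧
      ∀ y ∈ C, 0 ≤ ⟪gradient f xstar, y - xstar⟫ := by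
  have hxC : xstar ∈ C :=
    hCclosed.mem_of_tendsto hconv (Eventually.of_forall fun j => hmem (φ j))
  -- continuity of the gradient
  have hgrad_cont : Continuous (fun z => gradient f z) := by
    have h1 : Continuous (fderiv ℝ f) := hf.continuous_fderiv one_ne_zero
    exact ((InnerProductSpace.toDual ℝ H).symm.continuous).comp h1
  -- x (φ j + 1) → xstar
  have hnext : Tendsto (fun j => x (φ j + 1)) atTop (𝓝 xstar) := by
    have hd : Tendsto (fun j => x (φ j + 1) - x (φ j)) atTop (𝓝 0) :=
      tendsto_zero_iff_norm_tendsto_zero.2 hdiff0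
    have := hd.add hconv
    simpa using this
  -- limits of both sides of the projection inequality
  have hL : Tendsto (fun j => x (φ j) - μ • gradient f (x (φ j))) atTop
      (𝓝 (xstar - μ • gradient f xstar)) :=
    hconv.sub ((hgrad_cont.tendsto xstar).comp hconv |>.const_smul μ)
  have hfix : ∀ y ∈ C, ‖xstar - μ • gradient f xstar - xstar‖
      ≤ ‖xstar - μ • gradient f xstar - y‖ := by
    intro y hy
    have hLHS : Tendsto (fun j => ‖x (φ j) - μ • gradient f (x (φ j)) - x (φ j + 1)‖)
        atTop (𝓝 ‖xstar - μ • gradient f xstar - xstar‖) :=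
      ((hL.sub hnext).norm)
    have hRHS : Tendsto (fun j => ‖x (φ j) - μ • gradient f (x (φ j)) - y‖)
        atTop (𝓝 ‖xstar - μ • gradient f xstar - y‖) :=
      ((hL.sub tendsto_const_nhds).norm)
    exact le_of_tendsto_of_tendsto' hLHS hRHS fun j => hproj (φ j) y hy
  refine ⟨hxC, hfix, ?_⟩
  -- stationarity via the variational characterization of projections
  set u := xstar - μ • gradient f xstar with hu
  have hinf : ‖u - xstar‖ = ⨅ w : C, ‖u - w‖ := by
    haveI : Nonempty C := ⟨⟨xstar, hxC⟩⟩
    refine le_antisymm (le_ciInf fun w => hfix w w.2) ?_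
    exact ciInf_le ⟨0, fun _ ⟨_, h⟩ => h ▸ norm_nonneg _⟩ (⟨xstar, hxC⟩ : C)
  have hchar := (norm_eq_iInf_iff_real_inner_le_zero hCconv hxC).1 hinf
  intro y hy
  have h1 : ⟪u - xstar, y - xstar⟫ ≤ 0 := hchar y hy
  have h2 : u - xstar = -(μ • gradient f xstar) := by rw [hu]; abel
  rw [h2, inner_neg_left, inner_smul_left] at h1
  have : 0 ≤ μ * ⟪gradient f xstar, y - xstar⟫ := by
    simpa using neg_nonpos.mp h1
  exact nonneg_of_mul_nonneg_right this hμ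
end
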